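/- Let X be a complex Banach space and x, y ∈ X be nonzero. Then there exists a unimodular complex number β such that ‖x + tβy‖ ≥ ‖x‖ for all real t. -/

import Mathlib

theorem exists_direction_of_orthogonality {X : Type*} [NormedAddCommGroup X]
    [NormedSpace ℂ X] [CompleteSpace X] (x y : X) (hx : x ≠ 0) (hy : y ≠ 0) :
    ∃ β : ℂ, ‖β‖ = 1 ∧ ∀ t : ℝ, ‖x + (t : ℂ) • β • y‖ ≥ ‖x‖ := by
  obtain ⟨f, hf1, hfx⟩ := exists_dual_vector ℂ x (norm_ne_zero_iff.mpr hx)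
  set c := f y with hc
  have main : ∀ β : ℂ, (β * c).re = 0 → ∀ t : ℝ, ‖x + (t : ℂ) • β • y‖ ≥ ‖x‖ := by
    intro β hβ t
    have hfw : f (x + (t : ℂ) • β • y) = (‖x‖ : ℂ) + (t : ℂ) * (β * c) := by
      simp [map_add, map_smul, hfx, ← hc, smul_eq_mul, mul_assoc]
    have hre : (f (x + (t : ℂ) • β • y)).re = ‖x‖ := by
      rw [hfw]; simp [Complex.add_re, Complex.mul_re, hβ]
    calc ‖x‖ = (f (x + (t : ℂ) • β • y)).re := hre.symm
      _ ≤ ‖f (x + (t : ℂ) • β • y)‖ := Complex.re_le_norm _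
      _ ≤ ‖f‖ * ‖x + (t : ℂ) • β • y‖ := f.le_opNorm _
      _ = ‖x + (t : ℂ) • β • y‖ := by rw [hf1, one_mul]
  by_cases hc0 : c = 0
  · exact ⟨1, by simp, main 1 (by simp [hc0])⟩
  · refine ⟨Complex.I * (starRingEnd ℂ c) / ‖c‖, ?_, main _ ?_⟩
    · have : ‖c‖ ≠ 0 := norm_ne_zero_iff.mpr hc0
      rw [norm_div, norm_mul, Complex.norm_I, Complex.norm_conj, one_mul, Complex.norm_real, norm_norm, div_self this]
    · have h1 : Complex.I * (starRingEnd ℂ c) / ‖c‖ * c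
          = Complex.I * ((Complex.normSq c : ℝ) / ‖c‖ : ℝ) := by
        push_cast
        rw [div_mul_eq_mul_div, mul_assoc, mul_div_assoc]
        congr 2
        rw [mul_comm, Complex.mul_conj]
      rw [h1]
      simp
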